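/- Molien's theorem: let G be a finite group acting linearly on a finite-dimensional complex vector space V. Then the Hilbert series of the invariant ring satisfies ∑_{i≥0} dim_ℂ (Sym^i V)^G · q^i = (1/|G|) ∑_{g∈G} 1/det(1 - q·g), as formal power series in q. -/

import Mathlib

open PiTensorProduct PowerSeries
open scoped TensorProduct

noncomputable section

def symRel (V : Type*) [AddCommGroup V] [Module ℂ V] (i : ℕ) :
    Submodule ℂ (TensorPower ℂ i V) :=
  Submodule.span ℂ {x | ∃ (v : Fin i → V) (σ : Equiv.Perm (Fin i)),
    x = tprod ℂ v - tprod ℂ (v ∘ σ)}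

def SymPow (V : Type*) [AddCommGroup V] [Module ℂ V] (i : ℕ) :=
  (TensorPower ℂ i V) ⧸ symRel V i

instance (V : Type*) [AddCommGroup V] [Module ℂ V] (i : ℕ) : AddCommGroup (SymPow V i) :=
  inferInstanceAs (AddCommGroup ((TensorPower ℂ i V) ⧸ symRel V i))
instance (V : Type*) [AddCommGroup V] [Module ℂ V] (i : ℕ) : Module ℂ (SymPow V i) :=
  inferInstanceAs (Module ℂ ((TensorPower ℂ i V) ⧸ symRel V i))

def SymPow.map {V : Type*} [AddCommGroup V] [Module ℂ V] (i : ℕ) (w : V →ₗ[ℂ] V) :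
    SymPow V i →ₗ[ℂ] SymPow V i :=
  Submodule.mapQ (symRel V i) (symRel V i) (PiTensorProduct.map fun _ => w) (by
    rw [symRel, Submodule.span_le]
    rintro x ⟨v, σ, rfl⟩
    simp only [SetLike.mem_coe, Submodule.mem_comap, map_sub, PiTensorProduct.map_tprod]
    exact Submodule.subset_span ⟨fun j => w (v j), σ, rfl⟩)

end

noncomputable section MolienAux

open Module LinearMap Finset

namespace MolienAux

/-! ### Combinatorics of tuples and multisets -/

/-- The multiset of values of a tuple. -/
def tmset {α : Type*} {i : ℕ} (k : Fin i → α) : Multiset α := ↑(List.ofFn k)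

lemma tmset_card {α : Type*} {i : ℕ} (k : Fin i → α) : Multiset.card (tmset k) = i := by
  simp [tmset]

/-- A representative tuple of a multiset of size `i`. -/
def tupleOf {n i : ℕ} (m : Sym (Fin n) i) : Fin i → Fin n := fun j =>
  (Multiset.sort m.1 (· ≤ ·)).get (Fin.cast (by rw [Multiset.length_sort, m.2]) j)

lemma listGet_cast {α : Type*} {i : ℕ} (l : List α) (h : i = l.length) :
    List.ofFn (fun j : Fin i => l.get (Fin.cast h j)) = l := by
  subst h
  exact List.ofFn_get l

lemma tmset_tupleOf {n i : ℕ} (m : Sym (Fin n) i) : tmset (tupleOf m) = m.1 := by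
  have h : List.ofFn (tupleOf m) = Multiset.sort m.1 (· ≤ ·) :=
    listGet_cast (Multiset.sort m.1 (· ≤ ·)) (by rw [Multiset.length_sort, m.2])
  show ((List.ofFn (tupleOf m) : List (Fin n)) : Multiset (Fin n)) = m.1
  rw [h]
  exact Multiset.sort_eq (α := Fin n) m.1 (· ≤ ·)

lemma exists_comp_perm {n i : ℕ} {k k' : Fin i → Fin n} (h : tmset k = tmset k') :
    ∃ σ : Equiv.Perm (Fin i), k' = k ∘ σ := by
  have h1 : List.ofFn (k ∘ ⇑(Tuple.sort k)) = List.ofFn (k' ∘ ⇑(Tuple.sort k')) :=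
    List.Perm.eq_of_sortedLE
      (Tuple.monotone_sort k).sortedLE_ofFn (Tuple.monotone_sort k').sortedLE_ofFn
      (((Tuple.sort k).ofFn_comp_perm k).trans
        ((Multiset.coe_eq_coe.1 h).trans ((Tuple.sort k').ofFn_comp_perm k').symm))
  have h2 : k ∘ ⇑(Tuple.sort k) = k' ∘ ⇑(Tuple.sort k') := List.ofFn_inj.mp h1
  refine ⟨(Tuple.sort k').symm.trans (Tuple.sort k), funext fun j => ?_⟩
  have := congrFun h2 ((Tuple.sort k').symm j)
  simp only [Function.comp_apply, Equiv.apply_symm_apply] at this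
  simpa [Equiv.trans_apply] using this.symm

variable {V : Type*} [AddCommGroup V] [Module ℂ V]

/-! ### A basis of the symmetric power -/

/-- The quotient map onto the symmetric power. -/
def symMk (i : ℕ) : TensorPower ℂ i V →ₗ[ℂ] SymPow V i := (symRel V i).mkQ

variable {n : ℕ}

/-- Candidate basis vectors of `SymPow V i`. -/
def symEl (c : Basis (Fin n) ℂ V) (i : ℕ) (m : Sym (Fin n) i) : SymPow V i :=
  symMk i (tprod ℂ (c ∘ tupleOf m))

lemma symMk_eq (c : Basis (Fin n) ℂ V) {i : ℕ} {k k' : Fin i → Fin n}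
    (h : tmset k = tmset k') :
    symMk (V := V) i (tprod ℂ (c ∘ k)) = symMk i (tprod ℂ (c ∘ k')) := by
  obtain ⟨σ, rfl⟩ := exists_comp_perm h
  show Submodule.Quotient.mk _ = Submodule.Quotient.mk _
  rw [Submodule.Quotient.eq]
  exact Submodule.subset_span ⟨c ∘ k, σ, rfl⟩

lemma symMk_tuple (c : Basis (Fin n) ℂ V) {i : ℕ} (k : Fin i → Fin n) :
    symMk (V := V) i (tprod ℂ (c ∘ k)) = symEl c i ⟨tmset k, tmset_card k⟩ := by
  exact symMk_eq c (tmset_tupleOf (⟨tmset k, tmset_card k⟩ : Sym (Fin n) i)).symm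

/-- The linear map from the symmetric power to polynomials. -/
def polyMap (c : Basis (Fin n) ℂ V) (i : ℕ) : SymPow V i →ₗ[ℂ] MvPolynomial (Fin n) ℂ :=
  Submodule.liftQ _ (PiTensorProduct.lift
    ((MultilinearMap.mkPiAlgebra ℂ (Fin i) (MvPolynomial (Fin n) ℂ)).compLinearMap
      (fun _ => c.constr ℂ (fun q => MvPolynomial.X q)))) (by
    rw [symRel, Submodule.span_le]
    rintro x ⟨v, σ, rfl⟩
    simp only [SetLike.mem_coe, mem_ker, map_sub, lift.tprod,
      MultilinearMap.compLinearMap_apply, MultilinearMap.mkPiAlgebra_apply,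
      Function.comp_apply]
    rw [Equiv.prod_comp σ (fun j => (c.constr ℂ (fun q => MvPolynomial.X q)) (v j))]
    exact sub_self _)

lemma prod_X_list (l : List (Fin n)) :
    (l.map (MvPolynomial.X : Fin n → MvPolynomial (Fin n) ℂ)).prod
      = MvPolynomial.monomial (Multiset.toFinsupp (↑l : Multiset (Fin n))) 1 := by
  induction l with
  | nil => simp
  | cons a l ih =>
    simp only [List.map_cons, List.prod_cons, ih]
    have h1 : ((↑(a :: l) : Multiset (Fin n))) = {a} + ↑l := by
      rw [← Multiset.cons_coe, Multiset.singleton_add]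
    rw [h1, map_add, Multiset.toFinsupp_singleton]
    rw [show (MvPolynomial.X a : MvPolynomial (Fin n) ℂ)
        = MvPolynomial.monomial (Finsupp.single a 1) 1 from rfl]
    rw [MvPolynomial.monomial_mul, one_mul]

lemma prod_X_tuple {i : ℕ} (t : Fin i → Fin n) :
    (∏ j, (MvPolynomial.X (t j) : MvPolynomial (Fin n) ℂ))
      = MvPolynomial.monomial (Multiset.toFinsupp (tmset t)) 1 := by
  rw [show tmset t = ((List.ofFn t : List (Fin n)) : Multiset (Fin n)) from rfl,
    ← prod_X_list, List.map_ofFn, List.prod_ofFn]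
  rfl

lemma polyMap_symEl (c : Basis (Fin n) ℂ V) (i : ℕ) (m : Sym (Fin n) i) :
    polyMap c i (symEl c i m) = MvPolynomial.monomial (Multiset.toFinsupp m.1) 1 := by
  show polyMap c i (Submodule.Quotient.mk _) = _
  rw [polyMap]
  erw [Submodule.liftQ_apply, lift.tprod]
  simp only [MultilinearMap.compLinearMap_apply, MultilinearMap.mkPiAlgebra_apply,
    Function.comp_apply, Basis.constr_basis]
  rw [prod_X_tuple, tmset_tupleOf]

lemma symEl_linearIndependent (c : Basis (Fin n) ℂ V) (i : ℕ) :
    LinearIndependent ℂ (symEl c i) := by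
  apply LinearIndependent.of_comp (polyMap c i)
  have h : ⇑(polyMap c i) ∘ symEl c i
      = ⇑(MvPolynomial.basisMonomials (Fin n) ℂ) ∘ (fun m : Sym (Fin n) i => Multiset.toFinsupp m.1) := by
    funext m
    simp [Function.comp_apply, polyMap_symEl, MvPolynomial.coe_basisMonomials]
  rw [h]
  exact (MvPolynomial.basisMonomials (Fin n) ℂ).linearIndependent.comp _
    (fun m m' hmm => Subtype.ext (Multiset.toFinsupp.injective hmm))

lemma symEl_span (c : Basis (Fin n) ℂ V) (i : ℕ) :
    ⊤ ≤ Submodule.span ℂ (Set.range (symEl c i)) := by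
  rintro x -
  obtain ⟨y, rfl⟩ := Submodule.mkQ_surjective _ x
  have hy : y ∈ Submodule.span ℂ
      (Set.range (PiTensorProduct.tprod ℂ (s := fun _ : Fin i => V))) := by
    rw [PiTensorProduct.span_tprod_eq_top]; trivial
  induction hy using Submodule.span_induction with
  | mem t ht =>
    obtain ⟨v, rfl⟩ := ht
    have hv : (PiTensorProduct.tprod ℂ (s := fun _ : Fin i => V)) v
        = ∑ r : Fin i → Fin n, (∏ j, c.repr (v j) (r j)) •
            (PiTensorProduct.tprod ℂ) (fun j => c (r j)) := by
      conv_lhs => rw [show v = fun j => ∑ q, c.repr (v j) q • c q from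
        funext fun j => (c.sum_repr (v j)).symm]
      rw [MultilinearMap.map_sum (PiTensorProduct.tprod ℂ) (fun j q => c.repr (v j) q • c q)]
      exact Finset.sum_congr rfl fun r _ => by
        rw [MultilinearMap.map_smul_univ (PiTensorProduct.tprod ℂ)
          (fun j => c.repr (v j) (r j)) (fun j => c (r j))]
    show (symRel V i).mkQ _ ∈ _
    rw [hv, map_sum]
    apply Submodule.sum_mem
    intro r _
    rw [map_smul]
    apply Submodule.smul_mem
    apply Submodule.subset_span (R := ℂ) (M := SymPow V i)
    exact ⟨⟨tmset r, tmset_card r⟩, (symMk_tuple c r).symm⟩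
  | zero => simp; exact Submodule.zero_mem _
  | add u w _ _ hu hw => rw [map_add]; exact Submodule.add_mem _ hu hw
  | smul a u _ hu => rw [map_smul]; exact Submodule.smul_mem _ a hu

/-- A basis of the symmetric power indexed by multisets. -/
def symBasis (c : Basis (Fin n) ℂ V) (i : ℕ) : Basis (Sym (Fin n) i) ℂ (SymPow V i) :=
  Basis.mk (symEl_linearIndependent c i) (symEl_span c i)

lemma symPow_finite (c : Basis (Fin n) ℂ V) (i : ℕ) : Module.Finite ℂ (SymPow V i) :=
  Module.Finite.of_basis (symBasis c i)

/-! ### Trace of `SymPow.map` for a diagonalizable map -/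

lemma symMap_symEl (c : Basis (Fin n) ℂ V) (i : ℕ) (w : V →ₗ[ℂ] V) (lam : Fin n → ℂ)
    (hw : ∀ q, w (c q) = lam q • c q) (m : Sym (Fin n) i) :
    SymPow.map i w (symEl c i m) = ((m.1.map lam).prod) • symEl c i m := by
  show SymPow.map i w (Submodule.Quotient.mk _) = _
  rw [SymPow.map]
  erw [Submodule.mapQ_apply, PiTensorProduct.map_tprod]
  have h1 : (fun j => w ((c ∘ tupleOf m) j))
      = fun j => lam (tupleOf m j) • (c ∘ tupleOf m) j := funext fun j => hw _
  rw [h1, MultilinearMap.map_smul_univ (PiTensorProduct.tprod ℂ)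
    (fun j => lam (tupleOf m j)) (fun j => (⇑c ∘ tupleOf m) j)]
  rw [Submodule.Quotient.mk_smul]
  congr 1
  conv_rhs => rw [← tmset_tupleOf m]
  rw [show (Multiset.map lam (tmset (tupleOf m)))
      = ((List.map lam (List.ofFn (tupleOf m)) : List ℂ) : Multiset ℂ) from rfl]
  rw [Multiset.prod_coe, List.map_ofFn, List.prod_ofFn]
  rfl

lemma toMatrix_diag {W : Type*} [AddCommGroup W] [Module ℂ W] {κ : Type*} [Fintype κ]
    [DecidableEq κ] (d : Basis κ ℂ W) (f : W →ₗ[ℂ] W) (μ : κ → ℂ)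
    (h : ∀ q, f (d q) = μ q • d q) : toMatrix d d f = Matrix.diagonal μ := by
  ext p q
  rw [toMatrix_apply, h q, map_smul]
  by_cases hpq : p = q
  · subst hpq; simp [Basis.repr_self]
  · simp [Basis.repr_self, Finsupp.single_apply, Ne.symm hpq, Matrix.diagonal_apply_ne _ hpq]

lemma trace_symMap (c : Basis (Fin n) ℂ V) (i : ℕ) (w : V →ₗ[ℂ] V) (lam : Fin n → ℂ)
    (hw : ∀ q, w (c q) = lam q • c q) :
    trace ℂ (SymPow V i) (SymPow.map i w) = ∑ m : Sym (Fin n) i, ((m.1.map lam).prod) := by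
  haveI := symPow_finite c i
  classical
  have heig : ∀ m, SymPow.map i w (symBasis c i m) = ((m.1.map lam).prod) • symBasis c i m := by
    intro m
    have h1 : symBasis c i m = symEl c i m := Basis.mk_apply _ _ m
    rw [h1]
    exact symMap_symEl c i w lam hw m
  rw [trace_eq_matrix_trace ℂ (symBasis c i)]
  rw [toMatrix_diag (symBasis c i) _ (fun m => (m.1.map lam).prod) heig]
  rw [Matrix.trace_diagonal]

/-! ### Eigenbasis for finite order endomorphisms -/

lemma exists_eigenbasis [FiniteDimensional ℂ V] (φ : V →ₗ[ℂ] V) (M : ℕ) (hM : M ≠ 0)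
    (hφ : φ ^ M = 1) :
    ∃ (n : ℕ) (c : Basis (Fin n) ℂ V) (lam : Fin n → ℂ), ∀ q, φ (c q) = lam q • c q := by
  classical
  set f : Module.End ℂ V := φ with hf
  have hsq : Squarefree ((Polynomial.X : Polynomial ℂ) ^ M - Polynomial.C 1) :=
    (Polynomial.separable_X_pow_sub_C (1 : ℂ) (by exact_mod_cast hM) one_ne_zero).squarefree
  have haev : (Polynomial.aeval f) ((Polynomial.X : Polynomial ℂ) ^ M - Polynomial.C 1) = 0 := by
    rw [map_sub, map_pow, Polynomial.aeval_X, Polynomial.aeval_C]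
    simp [hf, hφ, Algebra.algebraMap_eq_smul_one]
    exact sub_eq_zero.mpr hφ
  have hss : f.IsSemisimple := Module.End.isSemisimple_of_squarefree_aeval_eq_zero hsq haev
  have htop : ⨆ μ : ℂ, f.eigenspace μ = ⊤ := by
    have h1 := Module.End.iSup_maxGenEigenspace_eq_top f
    simp_rw [← hss.isFinitelySemisimple.maxGenEigenspace_eq_eigenspace]
    exact h1
  have hfin : Set.Finite (setOf f.HasEigenvalue) := f.finite_hasEigenvalue
  set s : Finset ℂ := hfin.toFinset with hs
  have htop' : ⨆ μ : {x // x ∈ s}, f.eigenspace ↑μ = ⊤ := by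
    rw [← top_le_iff, ← htop]
    refine iSup_le fun μ => ?_
    by_cases h : f.HasEigenvalue μ
    · exact le_iSup_of_le ⟨μ, by simp [hs, Set.Finite.mem_toFinset, h]; exact h⟩ le_rfl
    · rw [Module.End.hasEigenvalue_iff, not_not] at h
      rw [h]
      exact bot_le
  have hind : iSupIndep (fun μ : {x // x ∈ s} => f.eigenspace ↑μ) :=
    f.eigenspaces_iSupIndep.comp Subtype.coe_injective
  have hint : DirectSum.IsInternal (fun μ : {x // x ∈ s} => f.eigenspace ↑μ) :=
    (DirectSum.isInternal_submodule_iff_iSupIndep_and_iSup_eq_top _).2 ⟨hind, htop'⟩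
  let bE : ∀ μ : {x // x ∈ s}, Basis (Fin (finrank ℂ (f.eigenspace ↑μ))) ℂ (f.eigenspace ↑μ) :=
    fun μ => Module.finBasis ℂ _
  let c0 := hint.collectedBasis bE
  let e := Fintype.equivFin ((μ : {x // x ∈ s}) × Fin (finrank ℂ (f.eigenspace ↑μ)))
  refine ⟨_, c0.reindex e, fun p => ((e.symm p).1 : ℂ), fun q => ?_⟩
  rw [Basis.reindex_apply]
  have hmem := hint.collectedBasis_mem bE (e.symm q)
  exact Module.End.mem_eigenspace_iff.mp hmem

/-! ### Power series identities -/

lemma geom (a : ℂ) :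
    (1 - (PowerSeries.C (R := ℂ) a) * PowerSeries.X) * PowerSeries.mk (fun i => a ^ i) = 1 := by
  have h : (1 - (PowerSeries.C (R := ℂ) a) * PowerSeries.X) * PowerSeries.mk (fun i => a ^ i)
      = PowerSeries.mk (fun i => a ^ i)
        - PowerSeries.C (R := ℂ) a * (PowerSeries.X * PowerSeries.mk (fun i => a ^ i)) := by ring
  rw [h]
  ext nn
  rw [map_sub, PowerSeries.coeff_C_mul]
  cases nn with
  | zero => simp
  | succ k => simp [PowerSeries.coeff_succ_X_mul, pow_succ, mul_comm]

lemma countProd (lam : Fin n → ℂ) (s : Multiset (Fin n)) :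
    (s.map lam).prod = ∏ q : Fin n, lam q ^ s.count q := by
  classical
  rw [Finset.prod_multiset_map_count]
  apply Finset.prod_subset (Finset.subset_univ _)
  intro q _ hq
  rw [Multiset.count_eq_zero_of_notMem (by simpa using hq), pow_zero]

lemma mk_sum_sym (lam : Fin n → ℂ) :
    PowerSeries.mk (fun i => ∑ m : Sym (Fin n) i, ((m.1.map lam).prod))
      = ∏ q : Fin n, PowerSeries.mk (fun i => lam q ^ i) := by
  classical
  ext d
  rw [PowerSeries.coeff_mk, PowerSeries.coeff_prod]
  refine Finset.sum_bij' (fun (m : Sym (Fin n) d) (_ : m ∈ Finset.univ) => Multiset.toFinsupp m.1)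
    (fun l hl => ⟨Finsupp.toMultiset l, ?_⟩) ?_ ?_ ?_ ?_ ?_
  · -- card of toMultiset
    rw [Finsupp.card_toMultiset]
    exact (Finsupp.sum_fintype l (fun _ (x : ℕ) => x) (fun q => rfl)).trans
      ((Finset.mem_finsuppAntidiag).1 hl).1
  · -- i maps into antidiagonal
    intro m _
    rw [Finset.mem_finsuppAntidiag]
    refine ⟨?_, Finset.subset_univ _⟩
    exact (Finsupp.sum_fintype _ (fun _ (x : ℕ) => x) (fun q => rfl)).symm.trans
      ((Multiset.toFinsupp_sum_eq m.1).trans m.2)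
  · intro l hl
    exact Finset.mem_univ _
  · intro m _
    exact Subtype.ext (Multiset.toFinsupp_toMultiset _)
  · intro l hl
    exact Finsupp.toMultiset_toFinsupp l
  · intro m _
    rw [countProd]
    refine Finset.prod_congr rfl fun q _ => ?_
    rw [PowerSeries.coeff_mk, Multiset.toFinsupp_apply]

lemma prodGeom (lam : Fin n → ℂ) :
    (∏ q : Fin n, (1 - (PowerSeries.C (R := ℂ) (lam q)) * PowerSeries.X)) *
      PowerSeries.mk (fun i => ∑ m : Sym (Fin n) i, ((m.1.map lam).prod)) = 1 := by
  rw [mk_sum_sym, ← Finset.prod_mul_distrib]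
  exact Finset.prod_eq_one fun q _ => geom (lam q)

/-! ### The determinant side -/

lemma map_det_cast {κ : Type*} [Fintype κ] [DecidableEq κ] (A : Matrix κ κ ℂ) :
    ((Matrix.det (1 - (Polynomial.X : Polynomial ℂ) • A.map Polynomial.C) :
        Polynomial ℂ) : PowerSeries ℂ)
      = Matrix.det (1 - (PowerSeries.X : PowerSeries ℂ) • A.map (PowerSeries.C (R := ℂ))) := by
  have h := RingHom.map_det (Polynomial.coeToPowerSeries.ringHom (R := ℂ))
      (1 - (Polynomial.X : Polynomial ℂ) • A.map Polynomial.C)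
  rw [show ((Matrix.det (1 - (Polynomial.X : Polynomial ℂ) • A.map Polynomial.C) :
      Polynomial ℂ) : PowerSeries ℂ)
    = (Polynomial.coeToPowerSeries.ringHom (R := ℂ))
        (Matrix.det (1 - (Polynomial.X : Polynomial ℂ) • A.map Polynomial.C)) from rfl]
  rw [h]
  congr 1
  refine Matrix.ext fun p q => ?_
  rw [RingHom.mapMatrix_apply, Matrix.map_apply, Matrix.sub_apply, Matrix.sub_apply,
    Matrix.smul_apply, Matrix.smul_apply, Matrix.map_apply, Matrix.map_apply, _root_.map_sub,
    smul_eq_mul, smul_eq_mul, _root_.map_mul]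
  by_cases hpq : p = q <;>
    simp [Matrix.one_apply, hpq, Polynomial.coeToPowerSeries.ringHom_apply,
      Polynomial.coe_C, Polynomial.coe_X, Polynomial.coe_one]

lemma detPS {ιb : Type*} [Fintype ιb] [DecidableEq ιb] (b : Basis ιb ℂ V)
    (c : Basis (Fin n) ℂ V) (φ : V →ₗ[ℂ] V) (lam : Fin n → ℂ)
    (hφ : toMatrix c c φ = Matrix.diagonal lam) :
    ((Matrix.det (1 - (Polynomial.X : Polynomial ℂ) • (toMatrix b b φ).map Polynomial.C) :
        Polynomial ℂ) : PowerSeries ℂ)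
      = ∏ q : Fin n, (1 - (PowerSeries.C (R := ℂ) (lam q)) * PowerSeries.X) := by
  classical
  set P : Matrix ιb (Fin n) ℂ := toMatrix c b (LinearMap.id) with hP
  set Q : Matrix (Fin n) ιb ℂ := toMatrix b c (LinearMap.id) with hQ
  have hQP : Q * P = 1 := by
    rw [hP, hQ, ← LinearMap.toMatrix_comp c b c LinearMap.id LinearMap.id, LinearMap.id_comp,
      LinearMap.toMatrix_id]
  have hA : toMatrix b b φ = P * toMatrix c c φ * Q := by
    rw [hP, hQ, ← LinearMap.toMatrix_comp c c b LinearMap.id φ, LinearMap.id_comp,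
      ← LinearMap.toMatrix_comp b c b φ LinearMap.id, LinearMap.comp_id]
  rw [map_det_cast (toMatrix b b φ), hA, hφ]
  rw [Matrix.map_mul, Matrix.map_mul]
  set Cps := PowerSeries.C (R := ℂ)
  set P' := P.map Cps with hP'
  set Q' := Q.map Cps with hQ'
  have hQP' : Q' * P' = 1 := by
    rw [hP', hQ', ← Matrix.map_mul, hQP]
    exact Matrix.map_one _ (map_zero _) (map_one _)
  have hsm : ((PowerSeries.X : PowerSeries ℂ) • (P' * (Matrix.diagonal lam).map Cps * Q'))
      = (P' * ((PowerSeries.X : PowerSeries ℂ) • (Matrix.diagonal lam).map Cps)) * Q' := by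
    rw [Matrix.mul_smul, Matrix.smul_mul]
  rw [hsm, Matrix.det_one_sub_mul_comm, ← Matrix.mul_assoc, hQP', Matrix.one_mul]
  have hdm : (Matrix.diagonal lam).map Cps = Matrix.diagonal (fun q => Cps (lam q)) :=
    Matrix.diagonal_map (map_zero _)
  have hsd : ((PowerSeries.X : PowerSeries ℂ) • Matrix.diagonal (fun q => Cps (lam q)))
      = Matrix.diagonal (fun q => Cps (lam q) * PowerSeries.X) := by
    ext p q
    by_cases hpq : p = q <;>
      simp [Matrix.diagonal, Matrix.smul_apply, hpq, smul_eq_mul, mul_comm]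
  rw [hdm, hsd]
  rw [show (1 : Matrix (Fin n) (Fin n) (PowerSeries ℂ)) = Matrix.diagonal (fun _ => 1) from
    Matrix.diagonal_one.symm, Matrix.diagonal_sub, Matrix.det_diagonal]

/-! ### The representation on the symmetric power -/

lemma symMap_mk (i : ℕ) (w : V →ₗ[ℂ] V) (y : TensorPower ℂ i V) :
    SymPow.map i w (Submodule.Quotient.mk y)
      = Submodule.Quotient.mk (PiTensorProduct.map (fun _ => w) y) := by
  rw [SymPow.map]
  erw [Submodule.mapQ_apply]

variable {G : Type*} [Group G] [Fintype G]

/-- The representation on the symmetric power. -/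
def symRep (ρ : Representation ℂ G V) (i : ℕ) : Representation ℂ G (SymPow V i) where
  toFun g := SymPow.map i (ρ g)
  map_one' := by
    refine LinearMap.ext fun x => ?_
    obtain ⟨y, rfl⟩ := Submodule.Quotient.mk_surjective _ x
    rw [symMap_mk, _root_.map_one ρ]
    rw [show (fun _ : Fin i => (1 : V →ₗ[ℂ] V)) = fun _ : Fin i => LinearMap.id from rfl,
      PiTensorProduct.map_id]
    rfl
  map_mul' g h := by
    refine LinearMap.ext fun x => ?_
    obtain ⟨y, rfl⟩ := Submodule.Quotient.mk_surjective _ x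
    rw [symMap_mk, _root_.map_mul ρ g h]
    rw [show (fun _ : Fin i => ρ g * ρ h) = fun _ : Fin i => (ρ g ∘ₗ ρ h) from rfl,
      PiTensorProduct.map_comp]
    show _ = SymPow.map i (ρ g) (SymPow.map i (ρ h) (Submodule.Quotient.mk y))
    rw [symMap_mk, symMap_mk]
    rfl

lemma symRep_invariants (ρ : Representation ℂ G V) (i : ℕ) :
    (⨅ g : G, eqLocus (SymPow.map i (ρ g)) LinearMap.id) = (symRep ρ i).invariants := by
  ext x
  simp only [Submodule.mem_iInf, LinearMap.mem_eqLocus, Representation.mem_invariants,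
    LinearMap.id_apply]
  rfl

/-! ### Averaging -/

lemma finrank_invariants_eq {W : Type*} [AddCommGroup W] [Module ℂ W] [FiniteDimensional ℂ W]
    (τ : Representation ℂ G W) :
    ((finrank ℂ τ.invariants : ℕ) : ℂ) = (Fintype.card G : ℂ)⁻¹ * ∑ g : G, trace ℂ W (τ g) := by
  haveI : Invertible ((Fintype.card G : ℂ)) := invertibleOfNonzero (by
    exact_mod_cast (Nat.cast_ne_zero (R := ℂ)).2 Fintype.card_ne_zero)
  rw [← (Representation.isProj_averageMap τ).trace]
  have h : τ.averageMap = ⅟(Fintype.card G : ℂ) • ∑ g : G, (τ g : W →ₗ[ℂ] W) := by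
    rw [Representation.averageMap, GroupAlgebra.average, map_smul, map_sum]
    congr 1
    exact Finset.sum_congr rfl fun g _ => by
      simp [MonoidAlgebra.of_apply, Representation.asAlgebraHom_single_one]
  rw [h, map_smul, map_sum, invOf_eq_inv, smul_eq_mul]

/-! ### Putting it together for a single group element -/

lemma perG {ιb : Type*} [Fintype ιb] [DecidableEq ιb] [FiniteDimensional ℂ V]
    (b : Basis ιb ℂ V) (φ : V →ₗ[ℂ] V) (M : ℕ) (hM : M ≠ 0) (hφM : φ ^ M = 1) :
    ((Matrix.det (1 - (Polynomial.X : Polynomial ℂ) • (toMatrix b b φ).map Polynomial.C) :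
        Polynomial ℂ) : PowerSeries ℂ)⁻¹
      = PowerSeries.mk (fun i => trace ℂ (SymPow V i) (SymPow.map i φ)) := by
  obtain ⟨n, c, lam, hc⟩ := exists_eigenbasis φ M hM hφM
  have hdiag : toMatrix c c φ = Matrix.diagonal lam := toMatrix_diag c φ lam hc
  rw [detPS b c φ lam hdiag]
  rw [PowerSeries.inv_eq_iff_mul_eq_one (by
    rw [map_prod]
    simp)]
  have hmk : PowerSeries.mk (fun i => trace ℂ (SymPow V i) (SymPow.map i φ))
      = PowerSeries.mk (fun i => ∑ m : Sym (Fin n) i, ((m.1.map lam).prod)) := by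
    exact congrArg PowerSeries.mk (funext fun i => trace_symMap c i φ lam hc)
  rw [hmk, mul_comm]
  exact prodGeom lam

end MolienAux

end MolienAux

theorem stmt4 (G : Type*) [Group G] [Fintype G]
    (V : Type*) [AddCommGroup V] [Module ℂ V] [FiniteDimensional ℂ V]
    (ρ : Representation ℂ G V)
    (ι : Type*) [Fintype ι] [DecidableEq ι] (b : Module.Basis ι ℂ V) :
    (PowerSeries.mk fun i => ((Module.finrank ℂ
        ↥(⨅ g : G, LinearMap.eqLocus (SymPow.map i (ρ g)) LinearMap.id) : ℕ) : ℂ)) =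
      (Fintype.card G : ℂ)⁻¹ •
        ∑ g : G, ((Matrix.det (1 - (Polynomial.X : Polynomial ℂ) •
          (LinearMap.toMatrix b b (ρ g)).map Polynomial.C) : Polynomial ℂ) :
            PowerSeries ℂ)⁻¹ := by
  classical
  let c₀ : Module.Basis (Fin (Module.finrank ℂ V)) ℂ V := Module.finBasis ℂ V
  have hg : ∀ g : G, ((Matrix.det (1 - (Polynomial.X : Polynomial ℂ) •
      (LinearMap.toMatrix b b (ρ g)).map Polynomial.C) : Polynomial ℂ) : PowerSeries ℂ)⁻¹
      = PowerSeries.mk (fun i => LinearMap.trace ℂ (SymPow V i) (SymPow.map i (ρ g))) :=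
    fun g => MolienAux.perG b (ρ g) (Fintype.card G) Fintype.card_ne_zero
      (by rw [← _root_.map_pow, pow_card_eq_one, _root_.map_one])
  apply PowerSeries.ext
  intro d
  haveI := MolienAux.symPow_finite c₀ d
  rw [PowerSeries.coeff_mk, map_smul, map_sum]
  have hRHS : (∑ g : G, (PowerSeries.coeff (R := ℂ) d) (((Matrix.det (1 -
      (Polynomial.X : Polynomial ℂ) • (LinearMap.toMatrix b b (ρ g)).map Polynomial.C) :
      Polynomial ℂ) : PowerSeries ℂ)⁻¹))
      = ∑ g : G, LinearMap.trace ℂ (SymPow V d) (SymPow.map d (ρ g)) :=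
    Finset.sum_congr rfl fun g _ => by rw [hg g, PowerSeries.coeff_mk]
  rw [hRHS, MolienAux.symRep_invariants ρ d,
    MolienAux.finrank_invariants_eq (MolienAux.symRep ρ d), smul_eq_mul]
  rfl
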